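/- Let γ(t) = (t^α, t^{α+1}h(t)) be a frontal plane curve (α ≥ 2) with q' = μ p'. A vector field germ ξ = (a,b) ∈ θ(γ) = O_1² is an infinitesimal frontal deformation of γ if and only if b' − μ a' lies in the ideal m_1^{α−1} of O_1 (equivalently b' − μ a' ∈ O_1·{p'} where p' = α t^{α−1}). Consequently F(γ) decomposes as F(γ) = K ⊕ Span_K{T₁, …, T_{α−1}} ⊕ m_1^α θ(γ), where T_j(t) = (t^j, B_j(t)), B_j(t) = j∫₀^t s^{j−1}μ(s) ds. -/

import Mathlib

set_option synthInstance.maxHeartbeats 1000000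

open PowerSeries

noncomputable section

/-- The ℂ-linear map `(a,b) ↦ b' − μ a'`. -/
def stmt15_Φ (μ : PowerSeries ℂ) :
    (PowerSeries ℂ × PowerSeries ℂ) →ₗ[ℂ] PowerSeries ℂ :=
  (derivative ℂ).toLinearMap ∘ₗ LinearMap.snd ℂ _ _
    - (LinearMap.mulLeft ℂ μ) ∘ₗ (derivative ℂ).toLinearMap ∘ₗ LinearMap.fst ℂ _ _

/-- The space `F(γ)` of infinitesimal frontal deformations of `γ = (p,q)`, `q' = μp'`:
`(a,b) ∈ F(γ)` iff `b' − μ a' ∈ O₁·{p'}`. -/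
def stmt15_F (p μ : PowerSeries ℂ) : Submodule ℂ (PowerSeries ℂ × PowerSeries ℂ) :=
  Submodule.comap (stmt15_Φ μ) ((Ideal.span {derivative ℂ p}).restrictScalars ℂ)

lemma stmt15_mem_span_X_pow (k : ℕ) (f : PowerSeries ℂ) :
    f ∈ Ideal.span {(X : PowerSeries ℂ) ^ k} ↔ ∀ m < k, coeff (R := ℂ) m f = 0 := by
  rw [Ideal.mem_span_singleton, X_pow_dvd_iff]

lemma stmt15_deriv_pow (n : ℕ) :
    derivative ℂ ((X : PowerSeries ℂ) ^ n) = (n : PowerSeries ℂ) * X ^ (n - 1) := by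
  rw [Derivation.leibniz_pow, derivative_X, smul_eq_mul, mul_one, nsmul_eq_mul]

lemma stmt15_span_deriv (n : ℕ) (hn : n ≠ 0) :
    Ideal.span {derivative ℂ ((X : PowerSeries ℂ) ^ n)}
      = Ideal.span {(X : PowerSeries ℂ) ^ (n - 1)} := by
  rw [stmt15_deriv_pow, Ideal.span_singleton_mul_left_unit]
  have := (isUnit_iff_ne_zero.mpr (Nat.cast_ne_zero.mpr hn : (n : ℂ) ≠ 0)).map (C (R := ℂ))
  simpa using this

lemma stmt15_deriv_mem (k : ℕ) (f : PowerSeries ℂ)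
    (hf : f ∈ Ideal.span {(X : PowerSeries ℂ) ^ (k + 1)}) :
    derivative ℂ f ∈ Ideal.span {(X : PowerSeries ℂ) ^ k} := by
  rw [stmt15_mem_span_X_pow] at hf ⊢
  intro m hm
  rw [coeff_derivative, hf (m + 1) (by omega), zero_mul]

lemma stmt15_antideriv_mem (k : ℕ) (f : PowerSeries ℂ)
    (h0 : coeff (R := ℂ) 0 f = 0)
    (hf : derivative ℂ f ∈ Ideal.span {(X : PowerSeries ℂ) ^ k}) :
    f ∈ Ideal.span {(X : PowerSeries ℂ) ^ (k + 1)} := by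
  rw [stmt15_mem_span_X_pow] at hf ⊢
  intro m hm
  match m, hm with
  | 0, _ => exact h0
  | m + 1, hm =>
    have h := hf m (by omega)
    rw [coeff_derivative] at h
    have hne : ((m : ℂ) + 1) ≠ 0 := by exact_mod_cast Nat.succ_ne_zero m
    exact (mul_eq_zero.mp h).resolve_right hne

/-- Let `γ(t) = (t^α, t^{α+1}h(t))`, `α ≥ 2`, be a frontal plane curve with `q' = μp'`,
and let `B_j` satisfy `B_j' = μ·(t^j)'` and `B_j(0) = 0` (so `T_j = (t^j, B_j)`).  Then
`(a,b)` is an infinitesimal frontal deformation of γ iff `b' − μ a'` lies in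
`m₁^{α−1} = (t^{α−1})` (equivalently, in `O₁·{p'}`), and consequently
`F(γ) = K ⊕ Span{T₁,…,T_{α−1}} ⊕ m₁^α θ(γ)` (`K` the constant fields). -/
theorem stmt15 (α : ℕ) (hα : 2 ≤ α) (h μ : PowerSeries ℂ)
    (hμ : derivative ℂ ((X : PowerSeries ℂ) ^ (α + 1) * h)
        = μ * derivative ℂ ((X : PowerSeries ℂ) ^ α))
    (B : ℕ → PowerSeries ℂ)
    (hB : ∀ j, derivative ℂ (B j) = μ * derivative ℂ ((X : PowerSeries ℂ) ^ j))
    (hB0 : ∀ j, constantCoeff (R := ℂ) (B j) = 0) :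
    (∀ a b : PowerSeries ℂ,
        (a, b) ∈ stmt15_F ((X : PowerSeries ℂ) ^ α) μ ↔
          derivative ℂ b - μ * derivative ℂ a ∈ Ideal.span {(X : PowerSeries ℂ) ^ (α - 1)})
    ∧ stmt15_F ((X : PowerSeries ℂ) ^ α) μ
        = Submodule.span ℂ {((1 : PowerSeries ℂ), (0 : PowerSeries ℂ)),
            ((0 : PowerSeries ℂ), (1 : PowerSeries ℂ))}
          ⊔ Submodule.span ℂ (Set.range fun j : Fin (α - 1) =>
              ((X : PowerSeries ℂ) ^ ((j : ℕ) + 1), B ((j : ℕ) + 1)))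
          ⊔ ((Ideal.span {(X : PowerSeries ℂ) ^ α}).restrictScalars ℂ).prod
              ((Ideal.span {(X : PowerSeries ℂ) ^ α}).restrictScalars ℂ) := by
  obtain ⟨k, rfl⟩ : ∃ k, α = k + 2 := ⟨α - 2, by omega⟩
  have h1 : k + 2 - 1 = k + 1 := rfl
  have hΦ : ∀ a b : PowerSeries ℂ,
      stmt15_Φ μ (a, b) = derivative ℂ b - μ * derivative ℂ a := fun a b => rfl
  have hmemF : ∀ a b : PowerSeries ℂ,
      ((a, b) ∈ stmt15_F ((X : PowerSeries ℂ) ^ (k + 2)) μ ↔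
        derivative ℂ b - μ * derivative ℂ a
          ∈ Ideal.span {(X : PowerSeries ℂ) ^ (k + 1)}) := by
    intro a b
    rw [stmt15_F, Submodule.mem_comap, Submodule.restrictScalars_mem, hΦ,
      stmt15_span_deriv (k + 2) (by omega), h1]
  refine ⟨fun a b => by rw [h1]; exact hmemF a b, ?_⟩
  apply le_antisymm
  · -- ⊆ : decompose an arbitrary element of F(γ)
    rintro ⟨a, b⟩ hab
    have hab' := (hmemF a b).mp hab
    set s : PowerSeries ℂ :=
      ∑ j ∈ Finset.range (k + 1), coeff (R := ℂ) (j + 1) a • (X : PowerSeries ℂ) ^ (j + 1) with hs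
    set sB : PowerSeries ℂ :=
      ∑ j ∈ Finset.range (k + 1), coeff (R := ℂ) (j + 1) a • B (j + 1) with hsB
    have hcoeff_s : ∀ m, coeff (R := ℂ) m s =
        ∑ j ∈ Finset.range (k + 1), (if m = j + 1 then coeff (R := ℂ) (j + 1) a else 0) := by
      intro m
      simp [hs, coeff_X_pow, mul_ite, mul_one, mul_zero]
    have hs0 : coeff (R := ℂ) 0 s = 0 := by
      rw [hcoeff_s]
      exact Finset.sum_eq_zero fun j _ => by rw [if_neg (by omega)]
    have hsm : ∀ m, 1 ≤ m → m ≤ k + 1 → coeff (R := ℂ) m s = coeff (R := ℂ) m a := by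
      intro m hm1 hm2
      rw [hcoeff_s, Finset.sum_eq_single (m - 1)]
      · have hm' : m - 1 + 1 = m := by omega
        rw [hm', if_pos rfl]
      · intro j _ hj; rw [if_neg (by omega)]
      · intro hmem; exact absurd (Finset.mem_range.mpr (by omega)) hmem
    have hds : derivative ℂ sB = μ * derivative ℂ s := by
      simp only [hs, hsB, map_sum, Derivation.map_smul, hB, Finset.mul_sum, mul_smul_comm]
    set r1 : PowerSeries ℂ := a - C (R := ℂ) (coeff (R := ℂ) 0 a) - s with hr1def
    set c2 : ℂ := coeff (R := ℂ) 0 b - coeff (R := ℂ) 0 sB with hc2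
    set r2 : PowerSeries ℂ := b - C (R := ℂ) c2 - sB with hr2def
    have hr1 : r1 ∈ Ideal.span {(X : PowerSeries ℂ) ^ (k + 2)} := by
      rw [stmt15_mem_span_X_pow]
      intro m hm
      match m, hm with
      | 0, _ =>
        have hs0' : constantCoeff (R := ℂ) s = 0 := by simpa using hs0
        simp [hr1def, hs0']
      | m + 1, hm =>
        simp [hr1def, coeff_C, hsm (m + 1) (by omega) (by omega)]
    have hr2 : r2 ∈ Ideal.span {(X : PowerSeries ℂ) ^ (k + 2)} := by
      apply stmt15_antideriv_mem
      · simp [hr2def, hc2, coeff_C]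
      · have hdr1 : derivative ℂ r1 = derivative ℂ a - derivative ℂ s := by
          simp [hr1def, map_sub, derivative_C]
        have : derivative ℂ r2 =
            (derivative ℂ b - μ * derivative ℂ a) + μ * derivative ℂ r1 := by
          rw [hdr1]; simp only [hr2def, map_sub, derivative_C, hds]; ring
        rw [this]
        exact Ideal.add_mem _ hab'
          (Ideal.mul_mem_left _ μ (stmt15_deriv_mem (k + 1) r1 hr1))
    have hsplit : ((a, b) : PowerSeries ℂ × PowerSeries ℂ) =
        (coeff (R := ℂ) 0 a • ((1 : PowerSeries ℂ), (0 : PowerSeries ℂ))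
          + c2 • ((0 : PowerSeries ℂ), (1 : PowerSeries ℂ)))
        + (s, sB) + (r1, r2) := by
      rw [Prod.ext_iff]
      constructor <;> · simp [hr1def, hr2def, smul_eq_C_mul]; try ring
    rw [hsplit]
    refine Submodule.add_mem _ (Submodule.add_mem _
      (Submodule.mem_sup_left (Submodule.mem_sup_left ?_))
      (Submodule.mem_sup_left (Submodule.mem_sup_right ?_)))
      (Submodule.mem_sup_right ?_)
    · exact Submodule.add_mem _
        (Submodule.smul_mem _ _ (Submodule.subset_span (by simp)))
        (Submodule.smul_mem _ _ (Submodule.subset_span (by simp)))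
    · have : ((s, sB) : PowerSeries ℂ × PowerSeries ℂ) =
          ∑ j ∈ Finset.range (k + 1), coeff (R := ℂ) (j + 1) a •
            (((X : PowerSeries ℂ) ^ (j + 1), B (j + 1)) : PowerSeries ℂ × PowerSeries ℂ) := by
        rw [Prod.ext_iff]
        constructor <;> simp [hs, hsB, Prod.fst_sum, Prod.snd_sum]
      rw [this]
      refine Submodule.sum_mem _ fun j hj => Submodule.smul_mem _ _ ?_
      exact Submodule.subset_span ⟨⟨j, Finset.mem_range.mp hj⟩, rfl⟩
    · exact ⟨hr1, hr2⟩
  · -- ⊇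
    refine sup_le (sup_le ?_ ?_) ?_
    · rw [Submodule.span_le]
      rintro x (rfl | rfl) <;>
        · rw [SetLike.mem_coe, hmemF]; simp
    · rw [Submodule.span_le]
      rintro x ⟨j, rfl⟩
      rw [SetLike.mem_coe, hmemF, hB]
      simp
    · rintro ⟨a, b⟩ ⟨ha, hb⟩
      rw [hmemF]
      refine sub_mem ?_ (Ideal.mul_mem_left _ μ ?_)
      · exact stmt15_deriv_mem (k + 1) b hb
      · exact stmt15_deriv_mem (k + 1) a ha
end
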